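/- Let Σ = {a, ā, b, b̄} with the indicated involution, k ≥ 1, and L ⊆ {b, b̄}*. Then the one-sided hairpin completion satisfies H_k(a*·L·ā^k, ∅) = { aⁱ w āʲ : i ≥ j ≥ k, w ∈ L }. -/

import Mathlib

inductive Letter : Type
  | a | abar | b | bbar
deriving DecidableEq

def lbar : Letter → Letter
  | .a => .abar
  | .abar => .a
  | .b => .bbar
  | .bbar => .b

def barw {α : Type} (bar : α → α) (w : List α) : List α := (w.map bar).reverse

def hairpin {α : Type} (bar : α → α) (k : ℕ) (L₁ L₂ : Language α) : Language α :=
  { w | ∃ γ a β : List α, w = γ ++ a ++ β ++ barw bar a ++ barw bar γ ∧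
      a.length = k ∧
      (γ ++ a ++ β ++ barw bar a ∈ L₁ ∨ a ++ β ++ barw bar a ++ barw bar γ ∈ L₂) }

lemma lbar_invol (c : Letter) : lbar (lbar c) = c := by cases c <;> rfl

lemma barw_replicate_a (n : ℕ) :
    barw lbar (List.replicate n Letter.a) = List.replicate n Letter.abar := by
  simp [barw, lbar]

lemma barw_replicate_abar (n : ℕ) :
    barw lbar (List.replicate n Letter.abar) = List.replicate n Letter.a := by
  simp [barw, lbar]

lemma barw_invol (w : List Letter) : barw lbar (barw lbar w) = w := by
  have h : lbar ∘ lbar = id := funext lbar_invol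
  simp [barw, List.map_reverse, List.map_map, h]

lemma barw_length (w : List Letter) : (barw lbar w).length = w.length := by
  simp [barw]

theorem hairpin_hardness_language {k : ℕ} (hk : 1 ≤ k) (L : Language Letter)
    (hL : ∀ w ∈ L, ∀ c ∈ w, c = Letter.b ∨ c = Letter.bbar) :
    hairpin lbar k
      { w | ∃ i : ℕ, ∃ u ∈ L,
          w = List.replicate i Letter.a ++ u ++ List.replicate k Letter.abar }
      (0 : Language Letter) =
    { w | ∃ i j : ℕ, ∃ u ∈ L, k ≤ j ∧ j ≤ i ∧
        w = List.replicate i Letter.a ++ u ++ List.replicate j Letter.abar } := by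
  ext w
  constructor
  · rintro ⟨γ, α, β, hw, hlen, hmem | hmem⟩
    swap
    · exact absurd hmem (Language.notMem_zero _)
    obtain ⟨i, u, hu, he⟩ := hmem
    -- suffix of length k: barw α = replicate k abar
    have hassoc : (γ ++ α ++ β) ++ barw lbar α
        = (List.replicate i Letter.a ++ u) ++ List.replicate k Letter.abar := by
      simpa [List.append_assoc] using he
    have hinj := List.append_inj' hassoc (by simp [barw_length, hlen])
    have hbarα : barw lbar α = List.replicate k Letter.abar := hinj.2
    have hα : α = List.replicate k Letter.a := by
      have := congrArg (barw lbar) hbarα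
      rwa [barw_invol, barw_replicate_abar] at this
    have hE2 : γ ++ List.replicate k Letter.a ++ β
        = List.replicate i Letter.a ++ u := by
      rw [← hα]; exact hinj.1
    set m := γ.length with hm
    have hlenE2 : m + k + β.length = i + u.length := by
      have := congrArg List.length hE2
      simp [List.length_append] at this
      omega
    -- show m + k ≤ i
    have hmk : m + k ≤ i := by
      by_contra hcon
      push_neg at hcon
      have hE2' : γ ++ (List.replicate k Letter.a ++ β)
          = List.replicate i Letter.a ++ u := by
        simpa [List.append_assoc] using hE2
      have hL1 : (γ ++ (List.replicate k Letter.a ++ β))[m + (k-1)]? = some Letter.a := by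
        rw [List.getElem?_append_right (by omega)]
        rw [List.getElem?_append_left (by simp; omega)]
        rw [List.getElem?_replicate, if_pos (by omega)]
      rw [hE2'] at hL1
      rw [List.getElem?_append_right (by simp; omega)] at hL1
      obtain ⟨hlt, heq⟩ := List.getElem?_eq_some_iff.mp hL1
      have hmem2 : Letter.a ∈ u := heq ▸ List.getElem_mem hlt
      rcases hL u hu _ hmem2 with h | h <;> simp at h
    -- γ ++ replicate k a = replicate (m+k) a
    have htake : γ ++ List.replicate k Letter.a = List.replicate (m + k) Letter.a := by
      have h1 : γ ++ List.replicate k Letter.a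
          = (List.replicate i Letter.a ++ u).take (m + k) := by
        rw [← hE2, List.take_append_of_le_length (by simp; omega)]
        rw [List.take_of_length_le (by simp; omega)]
      rw [h1, List.take_append_of_le_length (by simp; omega), List.take_replicate]
      congr 1
      omega
    have hγ : γ = List.replicate m Letter.a := by
      have h2 : γ ++ List.replicate k Letter.a
          = List.replicate m Letter.a ++ List.replicate k Letter.a := by
        rw [htake, List.replicate_add]
      exact (List.append_inj h2 (by simp [hm])).1
    have hβ : β = List.replicate (i - (m + k)) Letter.a ++ u := by
      have h2 : (γ ++ List.replicate k Letter.a)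
            ++ (List.replicate (i - (m + k)) Letter.a ++ u)
          = List.replicate i Letter.a ++ u := by
        rw [htake, ← List.append_assoc, ← List.replicate_add,
          show m + k + (i - (m + k)) = i from by omega]
      have h3 : (γ ++ List.replicate k Letter.a) ++ β
          = (γ ++ List.replicate k Letter.a)
            ++ (List.replicate (i - (m + k)) Letter.a ++ u) :=
        hE2.trans h2.symm
      exact List.append_cancel_left h3
    refine ⟨i, k + m, u, hu, by omega, by omega, ?_⟩
    have e1 : List.replicate i Letter.a
        = List.replicate m Letter.a
          ++ (List.replicate k Letter.a ++ List.replicate (i - (m + k)) Letter.a) := by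
      rw [← List.replicate_add, ← List.replicate_add]
      congr 1
      omega
    have e2 : List.replicate (k + m) Letter.abar
        = List.replicate k Letter.abar ++ List.replicate m Letter.abar :=
      List.replicate_add k m Letter.abar
    rw [hw, hγ, hα, hβ, barw_replicate_a, barw_replicate_a, e1, e2]
    simp only [List.append_assoc]
  · rintro ⟨i, j, u, hu, hkj, hji, hw⟩
    have e1 : List.replicate i Letter.a
        = List.replicate (j - k) Letter.a
          ++ (List.replicate k Letter.a ++ List.replicate (i - j) Letter.a) := by
      rw [← List.replicate_add, ← List.replicate_add]
      congr 1
      omega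
    refine ⟨List.replicate (j - k) Letter.a, List.replicate k Letter.a,
      List.replicate (i - j) Letter.a ++ u, ?_, by simp, Or.inl ?_⟩
    · have e2 : List.replicate j Letter.abar
          = List.replicate k Letter.abar ++ List.replicate (j - k) Letter.abar := by
        rw [← List.replicate_add]
        congr 1
        omega
      rw [hw, barw_replicate_a, barw_replicate_a, e1, e2]
      simp only [List.append_assoc]
    · refine ⟨i, u, hu, ?_⟩
      rw [barw_replicate_a, e1]
      simp only [List.append_assoc]
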